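/- Let a be a node belonging to V and let S be feasible for subtree(a) with a ∉ S. Then for every child c of a with c ∈ V, the set S ∩ subtree(c) is nonempty and feasible for subtree(c). (This is the decomposition step in the proof of Theorem 1: a feasible selection not containing the root of the subtree decomposes into nonempty feasible selections in each candidate child subtree.) -/

import Mathlib

/-!
The decomposition step in the proof of Theorem 1 of "STREAK": a feasible
selection not containing the root of the subtree decomposes into nonempty
feasible selections in each candidate child subtree.

Nodes of a finite rooted tree are represented by paths (lists of child
indices) from the root.
-/

/-- A finite rooted tree: each node has a finite list of children. -/
inductive RTree : Type where
  | node : List RTree → RTree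

namespace RTree

/-- The subtree reached by following a path of child indices, if it exists. -/
def subAt : RTree → List ℕ → Option RTree
  | t, [] => some t
  | node cs, i :: p =>
    match cs[i]? with
    | some c => subAt c p
    | none => none
termination_by t p => p.length

/-- A path is a node of the tree if following it leads to a subtree. -/
def valid (t : RTree) (p : List ℕ) : Prop := (t.subAt p).isSome

/-- `subtreeOf t p` is the set of nodes of `t` consisting of `p` together with
all of its descendants (nodes whose path extends `p`). -/
def subtreeOf (t : RTree) (p : List ℕ) : Set (List ℕ) :=
  {q | t.valid q ∧ p <+: q}

/-- A node `p ∈ V` is a `V`-leaf if no child of `p` belongs to `V`. -/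
def VLeaf (t : RTree) (V : Set (List ℕ)) (p : List ℕ) : Prop :=
  p ∈ V ∧ t.valid p ∧ ∀ i : ℕ, p ++ [i] ∉ V

/-- `S` is feasible for the subtree rooted at `p`: `S ⊆ V ∩ subtree(p)` and
every `V`-leaf lying in `subtree(p)` has an ancestor-or-self, itself lying in
`subtree(p)`, that belongs to `S`. -/
def Feasible (t : RTree) (V : Set (List ℕ)) (p : List ℕ) (S : Set (List ℕ)) : Prop :=
  S ⊆ V ∩ subtreeOf t p ∧
  ∀ q, VLeaf t V q → q ∈ subtreeOf t p →
    ∃ r ∈ S, r ∈ subtreeOf t p ∧ r <+: q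

end RTree


namespace RTree

/-- Depth bound of a tree. -/
def depth : RTree → ℕ
  | node cs => 1 + (cs.attach.map fun c => depth c.1).foldr max 0
decreasing_by
  have := List.sizeOf_lt_of_mem c.2
  simp only [RTree.node.sizeOf_spec] at *
  omega

lemma le_foldr_max (l : List ℕ) (x : ℕ) (h : x ∈ l) : x ≤ l.foldr max 0 := by
  induction l with
  | nil => simp at h
  | cons a as ih =>
    rcases List.mem_cons.1 h with h | h
    · subst h; simp
    · exact le_trans (ih h) (le_max_right _ _)

lemma depth_lt {cs : List RTree} {c : RTree} (h : c ∈ cs) :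
    depth c < depth (node cs) := by
  have : depth c ∈ cs.attach.map fun c => depth c.1 :=
    List.mem_map.2 ⟨⟨c, h⟩, List.mem_attach _ _, rfl⟩
  have := le_foldr_max _ _ this
  simp only [depth]
  omega

lemma length_lt_depth : ∀ (t : RTree) (p : List ℕ), t.valid p → p.length < t.depth := by
  intro t p
  induction p generalizing t with
  | nil =>
    intro _
    cases t with
    | node cs => simp [depth]
  | cons i p ih =>
    intro hv
    cases t with
    | node cs =>
      unfold valid subAt at hv
      rcases hc : cs[i]? with _ | c
      · rw [hc] at hv; simp at hv
      · rw [hc] at hv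
        have hmem : c ∈ cs := List.mem_of_getElem? hc
        have := ih c hv
        have := depth_lt hmem
        simp only [List.length_cons]
        omega

end RTree

open RTree in
/-- Let `a ∈ V` and let `S` be feasible for `subtree(a)` with `a ∉ S`.  Then
for every child `c` of `a` with `c ∈ V`, the set `S ∩ subtree(c)` is nonempty
and feasible for `subtree(c)`. -/
theorem streak_decomposition_step
    (t : RTree) (V : Set (List ℕ))
    (hVnodes : ∀ p ∈ V, t.valid p)
    (hanc : ∀ (p : List ℕ) (i : ℕ), p ++ [i] ∈ V → p ∈ V)
    (a : List ℕ) (ha : t.valid a) (haV : a ∈ V)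
    (S : Set (List ℕ)) (hS : Feasible t V a S) (haS : a ∉ S) :
    ∀ i : ℕ, t.valid (a ++ [i]) → a ++ [i] ∈ V →
      (S ∩ subtreeOf t (a ++ [i])).Nonempty ∧
      Feasible t V (a ++ [i]) (S ∩ subtreeOf t (a ++ [i])) := by
  classical
  intro i hvc hcV
  set c := a ++ [i] with hc
  -- find a V-leaf in subtree(c) by taking a longest element of V extending c
  have hclen : c.length = a.length + 1 := by simp [hc]
  set D := t.depth with hD
  set P : ℕ → Prop := fun n => ∃ q, q ∈ V ∧ c <+: q ∧ q.length = n with hP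
  have hPc : P c.length := ⟨c, hcV, List.prefix_refl c, rfl⟩
  have hcD : c.length ≤ D := le_of_lt (RTree.length_lt_depth t c hvc)
  set m := Nat.findGreatest P D with hm
  have hle : c.length ≤ m := Nat.le_findGreatest hcD hPc
  have hPm : P m := Nat.findGreatest_spec (m := c.length) hcD hPc
  obtain ⟨q, hqV, hcq, hqlen⟩ := hPm
  have hqvalid : t.valid q := hVnodes q hqV
  have hqleaf : VLeaf t V q := by
    refine ⟨hqV, hqvalid, ?_⟩
    intro j hj
    have hvj : t.valid (q ++ [j]) := hVnodes _ hj
    have hlt' : (q ++ [j]).length ≤ D := le_of_lt (RTree.length_lt_depth t _ hvj)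
    have : ¬ P (q ++ [j]).length := by
      apply Nat.findGreatest_is_greatest _ hlt'
      simp [hqlen]
      exact le_of_eq hm.symm
    exact this ⟨q ++ [j], hj, hcq.trans (by simp), rfl⟩
  -- apply feasibility of S at q
  have hacq : a <+: q := (List.prefix_append a [i]).trans hcq
  obtain ⟨r, hrS, ⟨hrvalid, harq⟩, hrq⟩ := hS.2 q hqleaf ⟨hqvalid, hacq⟩
  have hra : r ≠ a := fun h => haS (h ▸ hrS)
  have har : a <+: r := (hS.1 hrS).2.2
  have hlen : c.length ≤ r.length := by
    have := har.length_le
    rcases lt_or_eq_of_le this with h | h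
    · omega
    · exact absurd (List.IsPrefix.eq_of_length har h).symm hra
  have hcr : c <+: r := List.prefix_of_prefix_length_le hcq hrq hlen
  have hrsub : r ∈ subtreeOf t c := ⟨hrvalid, hcr⟩
  constructor
  · exact ⟨r, hrS, hrsub⟩
  · constructor
    · rintro x ⟨hxS, hxsub⟩
      exact ⟨(hS.1 hxS).1, hxsub⟩
    · rintro q' hq'leaf ⟨hq'valid, hcq'⟩
      have haq' : a <+: q' := (List.prefix_append a [i]).trans hcq'
      obtain ⟨r', hr'S, ⟨hr'valid, har'⟩, hr'q'⟩ := hS.2 q' hq'leaf ⟨hq'valid, haq'⟩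
      have hr'a : r' ≠ a := fun h => haS (h ▸ hr'S)
      have har'' : a <+: r' := (hS.1 hr'S).2.2
      have hlen' : c.length ≤ r'.length := by
        have := har''.length_le
        rcases lt_or_eq_of_le this with h | h
        · omega
        · exact absurd (List.IsPrefix.eq_of_length har'' h).symm hr'a
      have hcr' : c <+: r' := List.prefix_of_prefix_length_le hcq' hr'q' hlen'
      exact ⟨r', ⟨hr'S, hr'valid, hcr'⟩, ⟨hr'valid, hcr'⟩, hr'q'⟩
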